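/- Suppose Assumption (A) holds with p ≠ 1 (and p ≥ −n). Then B_p^φ(Λ_p^φ K) = n^n · (V(K)/V(Λ_p^φ K))^{n−1} · A_p^φ(K), where for p = 0 the functionals are B_0^φ and A_0^φ. -/

import Mathlib

open MeasureTheory Metric Filter Set Pointwise Topology

noncomputable section

namespace CurvIter

variable {n : ℕ}

/-- Euclidean `n`-space. -/
abbrev Euc (n : ℕ) : Type := EuclideanSpace ℝ (Fin n)

/-- Spherical Lebesgue measure `σ`: the `(n-1)`-dimensional Hausdorff measure restricted
to the unit sphere `S^{n-1}`. -/
def sphereσ (n : ℕ) : Measure (Euc n) :=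
  (μH[((n : ℝ) - 1)]).restrict (sphere (0 : Euc n) 1)

/-- A convex body: a compact convex set with nonempty interior. -/
def IsConvexBody (K : Set (Euc n)) : Prop :=
  Convex ℝ K ∧ IsCompact K ∧ (interior K).Nonempty

/-- The support function `h_K(u) = sup_{x ∈ K} ⟪x, u⟫`. -/
def suppFn (K : Set (Euc n)) (u : Euc n) : ℝ :=
  sSup ((fun x => (inner ℝ x u : ℝ)) '' K)

/-- `ν_K^{-1}(ω)`: the set of boundary points of `K` having an outer unit normal in `ω`. -/
def reverseGauss (K ω : Set (Euc n)) : Set (Euc n) :=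
  {x | x ∈ frontier K ∧ ∃ u ∈ ω, u ∈ sphere (0 : Euc n) 1 ∧
      ∀ y ∈ K, (inner ℝ y u : ℝ) ≤ (inner ℝ x u : ℝ)}

/-- `f` is a positive continuous curvature function for `K`:
`f` is positive and continuous on the sphere and `dS_K = f dσ`. -/
def IsCurvFn (K : Set (Euc n)) (f : Euc n → ℝ) : Prop :=
  ContinuousOn f (sphere (0 : Euc n) 1) ∧
  (∀ u ∈ sphere (0 : Euc n) 1, 0 < f u) ∧
  ∀ ω : Set (Euc n), MeasurableSet ω →
    μH[((n : ℝ) - 1)] (reverseGauss K ω) = ENNReal.ofReal (∫ u in ω, f u ∂(sphereσ n))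

/-- The prescribed curvature function of the `L_p` curvature image `Λ_p^φ K`:
`f = [V(K) / ((1/n) ∫ h_K^p/φ dσ)] ⬝ h_K^{p-1}/φ`. -/
def lpCurvFn (p : ℝ) (φ : Euc n → ℝ) (K : Set (Euc n)) : Euc n → ℝ :=
  fun u =>
    ((volume K).toReal /
      ((1 / (n : ℝ)) * ∫ v, suppFn K v ^ p / φ v ∂(sphereσ n))) *
    (suppFn K u ^ (p - 1) / φ u)

/-- `L = Λ_p^φ K`: `L` is a convex body whose curvature function is `lpCurvFn p φ K`
and with `∫ u/(φ(u) h_L(u)^{1-p}) dσ(u) = 0`. -/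
def IsLpCurvImage (p : ℝ) (φ : Euc n → ℝ) (K L : Set (Euc n)) : Prop :=
  IsConvexBody L ∧
  IsCurvFn L (lpCurvFn p φ K) ∧
  (∫ u, (1 / (φ u * suppFn L u ^ (1 - p))) • u ∂(sphereσ n)) = 0

/-- The polar body `K* = {y : ⟪x,y⟫ ≤ 1 ∀ x ∈ K}`. -/
def polarBody (K : Set (Euc n)) : Set (Euc n) :=
  {y | ∀ x ∈ K, (inner ℝ x y : ℝ) ≤ 1}

/-- `K` has its Santaló point at the origin: the origin is the interior point `x`
minimizing `V((K-x)*)`. -/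
def SantaloAtOrigin (K : Set (Euc n)) : Prop :=
  0 ∈ interior K ∧
  ∀ x ∈ interior K,
    volume (polarBody K) ≤ volume (polarBody ((fun y => y - x) '' K))

/-- The prescribed curvature function of the Petty curvature image `ΛK`:
`f_{ΛK} = (V(K)/V(K*)) ⬝ h_K^{-(n+1)}`. -/
def pettyCurvFn (K : Set (Euc n)) : Euc n → ℝ :=
  fun u => ((volume K).toReal / (volume (polarBody K)).toReal) * suppFn K u ^ (-(n : ℝ) - 1)

/-- `L = ΛK` is the Petty curvature image of `K`: a convex body with Santaló point at
the origin whose curvature function is `(V(K)/V(K*)) h_K^{-(n+1)}`. -/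
def IsPettyImage (K L : Set (Euc n)) : Prop :=
  IsConvexBody L ∧ SantaloAtOrigin L ∧ IsCurvFn L (pettyCurvFn K)

/-- Affine surface area `Ω(K) = ∫ f_K^{n/(n+1)} dσ`, as a functional of the curvature
function `f` of the body. -/
def ASA (n : ℕ) (f : Euc n → ℝ) : ℝ :=
  ∫ u, f u ^ ((n : ℝ) / ((n : ℝ) + 1)) ∂(sphereσ n)

/-- The functional `A_p^φ`. -/
def Afun (p : ℝ) (φ : Euc n → ℝ) (K : Set (Euc n)) : ℝ :=
  if p = 0 then
    (volume K).toReal *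
      Real.exp ((∫ u, -(1 / φ u) * Real.log (suppFn K u) ∂(sphereσ n)) /
        ((1 / (n : ℝ)) * ∫ u, 1 / φ u ∂(sphereσ n)))
  else
    (volume K).toReal * (∫ u, suppFn K u ^ p / φ u ∂(sphereσ n)) ^ (-(n : ℝ) / p)

/-- The functional `B_p^φ`, as a functional of the body `K` and its curvature function `f`. -/
def Bfun (p : ℝ) (φ : Euc n → ℝ) (K : Set (Euc n)) (f : Euc n → ℝ) : ℝ :=
  if p = 0 then
    (volume K).toReal ^ ((1 : ℤ) - (n : ℤ)) *
      Real.exp ((∫ u, (1 / φ u) * Real.log (φ u * f u) ∂(sphereσ n)) /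
        (∫ u, 1 / φ u ∂(sphereσ n))) ^ n *
      (∫ u, 1 / φ u ∂(sphereσ n)) ^ n
  else
    (volume K).toReal ^ ((1 : ℤ) - (n : ℤ)) *
      (∫ u, φ u ^ (1 / (p - 1)) * f u ^ (p / (p - 1)) ∂(sphereσ n)) ^ ((n : ℝ) * (p - 1) / p)

/-- The functional `Ω_p^φ`, as a functional of the curvature function `f` of the body. -/
def Ωfun (n : ℕ) (p : ℝ) (φ : Euc n → ℝ) (f : Euc n → ℝ) : ℝ :=
  if p = 0 then
    Real.exp ((∫ u, (1 / φ u) * Real.log (f u) ∂(sphereσ n)) /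
      ((1 / (n : ℝ)) * ∫ u, 1 / φ u ∂(sphereσ n)))
  else
    ∫ u, φ u ^ (1 / (p - 1)) * f u ^ (p / (p - 1)) ∂(sphereσ n)

/-- Assumption (A): the standing assumption on `p`, `φ` and `K`. -/
def AssumptionA (p : ℝ) (φ : Euc n → ℝ) (K : Set (Euc n)) : Prop :=
  IsConvexBody K ∧
  ContinuousOn φ (sphere (0 : Euc n) 1) ∧
  (∀ u ∈ sphere (0 : Euc n) 1, 0 < φ u) ∧
  ( (-(n : ℝ) < p ∧ p ≠ 1 ∧ (∀ u, φ (-u) = φ u) ∧ (∀ x ∈ K, -x ∈ K))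
  ∨ (-(n : ℝ) < p ∧ p ≤ -(n : ℝ) + 1 ∧ 0 ∈ interior K ∧
      (∫ u, (1 / (φ u * suppFn K u ^ (1 - p))) • u ∂(sphereσ n)) = 0)
  ∨ (-(n : ℝ) ≤ p ∧ p ≠ 1 ∧ φ = (fun _ => 1) ∧ 0 ∈ interior K ∧
      (∫ u, (suppFn K u ^ (p - 1)) • u ∂(sphereσ n)) = 0) )

end CurvIter

open CurvIter


section Helpers

private lemma ae_sphere {n : ℕ} {q : Euc n → Prop}
    (h : ∀ u ∈ sphere (0 : Euc n) 1, q u) : ∀ᵐ u ∂(sphereσ n), q u := by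
  unfold sphereσ
  exact (ae_restrict_iff' isClosed_sphere.measurableSet).2 (ae_of_all _ h)

private lemma sphere_integral_congr {n : ℕ} {f g : Euc n → ℝ}
    (h : ∀ u ∈ sphere (0 : Euc n) 1, f u = g u) :
    ∫ u, f u ∂(sphereσ n) = ∫ u, g u ∂(sphereσ n) :=
  integral_congr_ae (ae_sphere h)

private lemma aesm_sphere {n : ℕ} {f : Euc n → ℝ}
    (h : ContinuousOn f (sphere (0 : Euc n) 1)) :
    AEStronglyMeasurable f (sphereσ n) := by
  unfold sphereσ
  exact h.aestronglyMeasurable isClosed_sphere.measurableSet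

private lemma suppFn_pos {n : ℕ} {K : Set (Euc n)} (hKcomp : IsCompact K)
    (h0 : 0 ∈ interior K) {u : Euc n} (hu : u ∈ sphere (0 : Euc n) 1) :
    0 < suppFn K u := by
  obtain ⟨ε, hε, hball⟩ := Metric.mem_nhds_iff.1 (mem_interior_iff_mem_nhds.1 h0)
  have hu1 : ‖u‖ = 1 := mem_sphere_zero_iff_norm.1 hu
  have hx : (ε/2) • u ∈ K := by
    apply hball
    simp only [Metric.mem_ball, dist_zero_right, norm_smul, hu1, mul_one, Real.norm_eq_abs]
    rw [abs_of_pos (by linarith)]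
    linarith
  have hbdd : BddAbove ((fun x => (inner ℝ x u : ℝ)) '' K) :=
    (hKcomp.image (continuous_id.inner continuous_const)).bddAbove
  have hle : (inner ℝ ((ε/2) • u) u : ℝ) ≤ suppFn K u := le_csSup hbdd ⟨_, hx, rfl⟩
  have heq : (inner ℝ ((ε/2) • u) u : ℝ) = ε/2 := by
    rw [real_inner_smul_left, real_inner_self_eq_norm_sq, hu1]; ring
  rw [heq] at hle
  linarith

private lemma continuous_suppFn {n : ℕ} {K : Set (Euc n)} (hKc : IsCompact K)
    (hne : K.Nonempty) : Continuous (suppFn K) := by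
  obtain ⟨C, hC⟩ := hKc.exists_bound_of_continuousOn continuousOn_id
  have hbdd : ∀ w : Euc n, BddAbove ((fun x => (inner ℝ x w : ℝ)) '' K) := fun w =>
    (hKc.image (continuous_id.inner continuous_const)).bddAbove
  have key : ∀ u v : Euc n, suppFn K u ≤ suppFn K v + C * ‖u - v‖ := by
    intro u v
    refine csSup_le (hne.image _) ?_
    rintro r ⟨x, hx, rfl⟩
    have h1 : (inner ℝ x u : ℝ) = inner ℝ x v + inner ℝ x (u - v) := by
      rw [← inner_add_right]
      congr 1
      abel
    have h2 : (inner ℝ x v : ℝ) ≤ suppFn K v := le_csSup (hbdd v) ⟨x, hx, rfl⟩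
    have h3 : (inner ℝ x (u - v) : ℝ) ≤ ‖x‖ * ‖u - v‖ := real_inner_le_norm x (u - v)
    have h4 : ‖x‖ * ‖u - v‖ ≤ C * ‖u - v‖ :=
      mul_le_mul_of_nonneg_right (by simpa using hC x hx) (norm_nonneg _)
    simp only []
    linarith
  have hC0 : 0 ≤ C := by
    obtain ⟨x, hx⟩ := hne
    exact le_trans (norm_nonneg x) (by simpa using hC x hx)
  have hlip : LipschitzWith ⟨C, hC0⟩ (suppFn K) := by
    refine LipschitzWith.of_dist_le_mul fun u v => ?_
    rw [Real.dist_eq, abs_sub_le_iff, dist_eq_norm]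
    have k1 := key u v
    have k2 := key v u
    rw [← norm_sub_rev u v] at k2
    constructor <;> [skip; skip] <;> show _ ≤ C * ‖u - v‖ <;> linarith
  exact hlip.continuous

end Helpers

/-- the key identity
`B_p^φ(Λ_p^φ K) = n^n (V(K)/V(Λ_p^φ K))^{n-1} A_p^φ(K)`. -/
theorem key_identity (n : ℕ) (hn : 2 ≤ n) (p : ℝ) (hp : p ≠ 1)
    (φ : Euc n → ℝ) (K L : Set (Euc n))
    (hA : AssumptionA p φ K)
    (hL : IsLpCurvImage p φ K L) :
    Bfun p φ L (lpCurvFn p φ K) =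
      (n : ℝ) ^ n * ((volume K).toReal / (volume L).toReal) ^ (n - 1) * Afun p φ K := by
  obtain ⟨hKbody, hφcont, hφpos, hcase⟩ := hA
  obtain ⟨hLbody, ⟨hfcont, hfpos, hfmeas⟩, hLint⟩ := hL
  have hn0 : (n : ℝ) ≠ 0 := Nat.cast_ne_zero.2 (by omega)
  have hp1 : p - 1 ≠ 0 := sub_ne_zero.2 hp
  -- the origin is interior to K
  have h0K : (0 : Euc n) ∈ interior K := by
    rcases hcase with ⟨_, _, _, hsym⟩ | ⟨_, _, h0, _⟩ | ⟨_, _, _, h0, _⟩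
    · obtain ⟨x, hx⟩ := hKbody.2.2
      have hnx : -x ∈ K := hsym x (interior_subset hx)
      have := hKbody.1.combo_interior_self_mem_interior hx hnx
        (by norm_num : (0:ℝ) < 1/2) (by norm_num : (0:ℝ) ≤ 1/2) (by norm_num)
      rwa [show (1/2 : ℝ) • x + (1/2 : ℝ) • (-x) = 0 by module] at this
    · exact h0
    · exact h0
  have hS : ∀ u ∈ sphere (0 : Euc n) 1, 0 < suppFn K u :=
    fun u hu => suppFn_pos hKbody.2.1 h0K hu
  -- a point on the sphere
  have hu₀ : EuclideanSpace.single (⟨0, by omega⟩ : Fin n) (1:ℝ) ∈ sphere (0 : Euc n) 1 := by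
    rw [mem_sphere_zero_iff_norm, EuclideanSpace.norm_single]
    norm_num
  set u₀ : Euc n := EuclideanSpace.single (⟨0, by omega⟩ : Fin n) (1:ℝ) with hu₀def
  set a := (volume K).toReal with ha_def
  set Ip := ∫ u, suppFn K u ^ p / φ u ∂(sphereσ n) with hIp
  set c := a / ((1 / (n : ℝ)) * Ip) with hc
  have hflpc : lpCurvFn p φ K = fun u => c * (suppFn K u ^ (p - 1) / φ u) := rfl
  have hc0 : 0 < c := by
    have hpos0 := hfpos u₀ hu₀
    rw [hflpc] at hpos0
    have hd : 0 < suppFn K u₀ ^ (p - 1) / φ u₀ :=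
      div_pos (Real.rpow_pos_of_pos (hS u₀ hu₀) _) (hφpos u₀ hu₀)
    nlinarith
  have ha0 : 0 ≤ a := ENNReal.toReal_nonneg
  have hIppos : 0 < Ip := by
    rcases lt_trichotomy Ip 0 with h | h | h
    · exfalso
      have hn' : (0:ℝ) < 1 / (n:ℝ) := by
        have : (0:ℝ) < (n:ℝ) := Nat.cast_pos.2 (by omega)
        positivity
      have hd : (1 / (n:ℝ)) * Ip ≤ 0 := by nlinarith
      have : c ≤ 0 := by rw [hc]; exact div_nonpos_of_nonneg_of_nonpos ha0 hd
      linarith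
    · exfalso
      rw [hc, h, mul_zero, div_zero] at hc0
      exact lt_irrefl 0 hc0
    · exact h
  have ha : 0 < a := by
    rcases div_pos_iff.1 hc0 with ⟨h1, _⟩ | ⟨_, h2⟩
    · exact h1
    · exfalso
      have hn' : (0:ℝ) < (n:ℝ) := Nat.cast_pos.2 (by omega)
      nlinarith
  have hb : 0 < (volume L).toReal := by
    refine ENNReal.toReal_pos ?_ hLbody.2.1.measure_lt_top.ne
    refine ne_of_gt (lt_of_lt_of_le ?_ (measure_mono interior_subset))
    exact isOpen_interior.measure_pos volume hLbody.2.2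
  have hcv : c = (n : ℝ) * a / Ip := by
    rw [eq_div_iff hIppos.ne', hc]
    field_simp
  by_cases hp0 : p = 0
  · -- p = 0
    subst hp0
    have hIpJ : Ip = ∫ u, 1 / φ u ∂(sphereσ n) := by
      rw [hIp]
      simp only [Real.rpow_zero]
    have hJpos : 0 < ∫ u, 1 / φ u ∂(sphereσ n) := hIpJ ▸ hIppos
    have hJne : (∫ u, 1 / φ u ∂(sphereσ n)) ≠ 0 := hJpos.ne'
    have hJint : Integrable (fun u => 1 / φ u) (sphereσ n) := by
      by_contra hni
      rw [integral_undef hni] at hJpos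
      exact lt_irrefl 0 hJpos
    have hconth : Continuous (suppFn K) :=
      continuous_suppFn hKbody.2.1 ⟨0, interior_subset h0K⟩
    have hlog : ContinuousOn (fun u => Real.log (suppFn K u)) (sphere (0:Euc n) 1) :=
      ContinuousOn.log hconth.continuousOn fun u hu => (hS u hu).ne'
    have hinvφ : ContinuousOn (fun u => 1 / φ u) (sphere (0:Euc n) 1) :=
      continuousOn_const.div hφcont fun u hu => (hφpos u hu).ne'
    have hTint : Integrable (fun u => (1 / φ u) * Real.log (suppFn K u)) (sphereσ n) := by
      obtain ⟨C, hC⟩ := (isCompact_sphere (0:Euc n) 1).exists_bound_of_continuousOn hlog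
      refine Integrable.mono' (hJint.const_mul (max C 0))
        (aesm_sphere (hinvφ.mul hlog)) (ae_sphere fun u hu => ?_)
      have hφu := hφpos u hu
      rw [norm_mul, Real.norm_eq_abs, Real.norm_eq_abs, abs_of_pos (by positivity : 0 < 1 / φ u)]
      calc (1 / φ u) * |Real.log (suppFn K u)| ≤ (1 / φ u) * max C 0 := by
            refine mul_le_mul_of_nonneg_left ?_ (by positivity)
            exact le_trans (hC u hu) (le_max_left _ _)
        _ = max C 0 * (1 / φ u) := by ring
    set T := ∫ u, (1 / φ u) * Real.log (suppFn K u) ∂(sphereσ n) with hT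
    set J := ∫ u, 1 / φ u ∂(sphereσ n) with hJ
    have hBint : ∫ u, (1 / φ u) * Real.log (φ u * lpCurvFn 0 φ K u) ∂(sphereσ n)
        = Real.log c * J - T := by
      rw [hT, hJ, ← integral_const_mul, ← integral_sub (hJint.const_mul _) hTint]
      refine sphere_integral_congr fun u hu => ?_
      have hφu := hφpos u hu
      have hKu := hS u hu
      have e : φ u * lpCurvFn 0 φ K u = c * (suppFn K u)⁻¹ := by
        rw [hflpc]
        simp only []
        rw [show ((0:ℝ) - 1) = -1 by norm_num, Real.rpow_neg_one]
        field_simp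
      rw [e, Real.log_mul hc0.ne' (inv_ne_zero hKu.ne'), Real.log_inv]
      ring
    have hAint : ∫ u, -(1 / φ u) * Real.log (suppFn K u) ∂(sphereσ n) = -T := by
      rw [hT, ← integral_neg]
      congr 1
      funext u
      ring
    simp only [Bfun, Afun, eq_self_iff_true, if_true, if_pos rfl]
    rw [hBint, hAint]
    have eexp : Real.exp ((Real.log c * J - T) / J) = c * Real.exp (-(T / J)) := by
      rw [show (Real.log c * J - T) / J = Real.log c + -(T / J) by field_simp; ring,
        Real.exp_add, Real.exp_log hc0]
    have eexp2 : Real.exp (-T / ((1 / (n:ℝ)) * J)) = Real.exp (-(T / J)) ^ n := by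
      rw [← Real.exp_nat_mul]
      congr 1
      field_simp
    rw [eexp, eexp2]
    obtain ⟨k, rfl⟩ : ∃ k, n = k + 1 := ⟨n - 1, by omega⟩
    rw [show ((1:ℤ) - ((k+1:ℕ):ℤ)) = -(k:ℤ) by push_cast; ring, zpow_neg, zpow_natCast]
    simp only [Nat.add_sub_cancel]
    have hcval : c * Ip = ((k+1:ℕ):ℝ) * a := by
      rw [hc]; field_simp
    have hcJraw : c * (∫ u, 1 / φ u ∂(sphereσ (k+1))) = ((k+1:ℕ):ℝ) * a := by
      rw [← hJ, ← hIpJ]; exact hcval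
    have keypow : c ^ (k+1) * (∫ u, 1 / φ u ∂(sphereσ (k+1))) ^ (k+1)
        = (((k+1:ℕ):ℝ)) ^ (k+1) * a ^ (k+1) := by
      rw [← mul_pow, hcJraw, mul_pow]
    linear_combination (((volume L).toReal ^ k)⁻¹ * Real.exp (-(T / J)) ^ (k+1)) * keypow
  · -- p ≠ 0
    have hint : ∫ u, φ u ^ (1 / (p - 1)) * (lpCurvFn p φ K u) ^ (p / (p - 1)) ∂(sphereσ n)
        = c ^ (p / (p - 1)) * Ip := by
      rw [hIp, ← integral_const_mul]
      refine sphere_integral_congr fun u hu => ?_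
      have hK := hS u hu
      have hφ := hφpos u hu
      have e1 : (suppFn K u ^ (p - 1) : ℝ) ^ (p / (p - 1)) = suppFn K u ^ p := by
        rw [← Real.rpow_mul hK.le]
        congr 1
        field_simp
      have e2 : φ u ^ ((1:ℝ) / (p - 1)) * (φ u ^ (p / (p - 1)))⁻¹ = (φ u)⁻¹ := by
        rw [← Real.rpow_neg hφ.le, ← Real.rpow_add hφ,
          show (1:ℝ)/(p-1) + -(p/(p-1)) = -1 by field_simp; ring, Real.rpow_neg_one]
      rw [hflpc]
      simp only []
      rw [Real.mul_rpow hc0.le (div_nonneg (Real.rpow_nonneg hK.le _) hφ.le),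
        Real.div_rpow (Real.rpow_nonneg hK.le _) hφ.le, e1,
        div_eq_mul_inv (suppFn K u ^ p), div_eq_mul_inv (suppFn K u ^ p), ← e2]
      ring
    simp only [Bfun, Afun, if_neg hp0]
    rw [hint, ← hIp]
    rw [Real.mul_rpow (Real.rpow_nonneg hc0.le _) hIppos.le,
      ← Real.rpow_mul hc0.le,
      show (p/(p-1)) * ((n:ℝ)*(p-1)/p) = ((n:ℕ):ℝ) by field_simp,
      Real.rpow_natCast,
      show ((n:ℝ)*(p-1)/p) = ((n:ℕ):ℝ) + (-(n:ℝ)/p) by field_simp; ring,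
      Real.rpow_add hIppos, Real.rpow_natCast]
    obtain ⟨k, rfl⟩ : ∃ k, n = k + 1 := ⟨n - 1, by omega⟩
    rw [show ((1:ℤ) - ((k+1:ℕ):ℤ)) = -(k:ℤ) by push_cast; ring, zpow_neg, zpow_natCast]
    simp only [Nat.add_sub_cancel]
    have hcval : c * Ip = ((k+1:ℕ):ℝ) * a := by
      rw [hc]; field_simp
    have keypow : c ^ (k+1) * Ip ^ (k+1) = (((k+1:ℕ):ℝ)) ^ (k+1) * a ^ (k+1) := by
      rw [← mul_pow, hcval, mul_pow]
    linear_combination (((volume L).toReal ^ k)⁻¹ * Ip ^ (-((k+1:ℕ):ℝ)/p)) * keypow
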